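/- arXiv:1102.2418 — 3 statements merged into one kernel-verified Lean document; each statement's English description precedes it below -/
import Mathlib

section
/- The Lax equation admits a spectral parameter: if A : I → M_N(ℝ) is a differentiable curve on an interval I satisfying Ȧ(t) = [A(t), B(A(t))], then for every z ∈ ℂ the curve X(t) = A(t) − z M_y satisfies d/dt X(t) = [X(t), B(A(t)) + z M_f]. -/
open Matrix BigOperators Finset

/-- The commutator of two real `N × N` matrices. -/
def matComm {N : ℕ} (A B : Matrix (Fin N) (Fin N) ℝ) : Matrix (Fin N) (Fin N) ℝ :=
  A * B - B * A

/-- The commutator of two complex `N × N` matrices. -/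
noncomputable def matCommC {N : ℕ} (A B : Matrix (Fin N) (Fin N) ℂ) : Matrix (Fin N) (Fin N) ℂ :=
  A * B - B * A

/-- The Rankine–Hugoniot multiplier matrix. -/
noncomputable def Fmat {N : ℕ} (u : Fin N → ℝ) (f : ℝ → ℝ) :
    Matrix (Fin N) (Fin N) ℝ :=
  Matrix.of fun i j =>
    if i = j then -(deriv f (u i)) else -((f (u i) - f (u j)) / (u i - u j))

/-- The Markov prescription: `B(A)_{ij} = F_{ij} A_{ij}` off the diagonal and
`B(A)_{ii} = -∑_{j ≠ i} B(A)_{ij}`. -/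
noncomputable def BofA {N : ℕ} (u : Fin N → ℝ) (f : ℝ → ℝ)
    (A : Matrix (Fin N) (Fin N) ℝ) : Matrix (Fin N) (Fin N) ℝ :=
  Matrix.of fun i j =>
    if i = j then -∑ k ∈ Finset.univ.filter (fun k => k ≠ i), Fmat u f i k * A i k
    else Fmat u f i j * A i j

/-- Entrywise complexification of a real matrix. -/
noncomputable def toC {N : ℕ} (A : Matrix (Fin N) (Fin N) ℝ) : Matrix (Fin N) (Fin N) ℂ :=
  A.map (fun x : ℝ => (x : ℂ))

/-- The Lax equation admits a spectral parameter: any solution `Ȧ = [A, B(A)]`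
gives, for each `z ∈ ℂ`, a solution `X(t) = A(t) - z M_y` of
`Ẋ = [X, B(A) + z M_f]`, where `M_y = diag(u)`, `M_f = diag(f ∘ u)`. -/
theorem spectral_parameter (N : ℕ) (u : Fin N → ℝ) (hu : StrictMono u)
    (f : ℝ → ℝ) (I : Set ℝ) (A : ℝ → Matrix (Fin N) (Fin N) ℝ)
    (hA : ∀ t ∈ I, ∀ i j, HasDerivAt (fun s => A s i j)
      (matComm (A t) (BofA u f (A t)) i j) t) :
    ∀ z : ℂ, ∀ t ∈ I, ∀ i j,
      HasDerivAt
        (fun s => (toC (A s) - z • Matrix.diagonal (fun k => (u k : ℂ))) i j)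
        ((matCommC (toC (A t) - z • Matrix.diagonal (fun k => (u k : ℂ)))
          (toC (BofA u f (A t)) + z • Matrix.diagonal (fun k => (f (u k) : ℂ)))) i j)
        t := by
  intro z t ht i j
  have hinj : Function.Injective u := hu.injective
  set B := BofA u f (A t) with hB
  set Du : Matrix (Fin N) (Fin N) ℂ := Matrix.diagonal (fun k => (u k : ℂ)) with hDu
  set Df : Matrix (Fin N) (Fin N) ℂ := Matrix.diagonal (fun k => (f (u k) : ℂ)) with hDf
  -- key cancellation lemma
  have cancel : toC (A t) * Df - Df * toC (A t) = Du * toC B - toC B * Du := by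
    ext i j
    simp only [hDu, hDf, Matrix.sub_apply, Matrix.mul_diagonal, Matrix.diagonal_mul, toC,
      Matrix.map_apply]
    by_cases h : i = j
    · subst h; ring
    · have hne : u i - u j ≠ 0 := sub_ne_zero.mpr (fun hh => h (hinj hh))
      have hneC : (u i : ℂ) - (u j : ℂ) ≠ 0 := by
        exact_mod_cast hne
      simp only [hB, BofA, Fmat, Matrix.of_apply, if_neg h]
      push_cast
      field_simp
      ring
  have hcomm : Du * Df = Df * Du := by
    simp [hDu, hDf, Matrix.diagonal_mul_diagonal, mul_comm]
  have hmul : ∀ P Q : Matrix (Fin N) (Fin N) ℝ, toC (P * Q) = toC P * toC Q := by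
    intro P Q
    ext i j
    simp [toC, Matrix.mul_apply]
  have key : matCommC (toC (A t) - z • Du) (toC B + z • Df)
      = toC (matComm (A t) B) := by
    have expand : matCommC (toC (A t) - z • Du) (toC B + z • Df)
        = (toC (A t) * toC B - toC B * toC (A t))
          + z • ((toC (A t) * Df - Df * toC (A t)) - (Du * toC B - toC B * Du))
          - (z * z) • (Du * Df - Df * Du) := by
      simp only [matCommC, Matrix.sub_mul, Matrix.mul_sub, Matrix.add_mul,
        Matrix.mul_add, Matrix.smul_mul, Matrix.mul_smul, smul_smul, smul_sub, smul_add]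
      abel
    rw [expand, cancel, hcomm]
    simp only [sub_self, smul_zero, add_zero, sub_zero, matComm]
    rw [show toC (A t * B - B * A t) = toC (A t * B) - toC (B * A t) by
      ext i j; simp [toC, Matrix.map_apply], hmul, hmul]
  have hconst : ∀ s : ℝ, (toC (A s) - z • Du) i j = ((A s i j : ℝ) : ℂ) - (z • Du) i j := by
    intro s; simp [toC, Matrix.sub_apply, Matrix.map_apply]
  have hd := ((hA t ht i j).ofReal_comp).sub_const ((z • Du) i j)
  have : HasDerivAt (fun s => (toC (A s) - z • Du) i j)
      (((matComm (A t) B i j : ℝ) : ℂ)) t := by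
    simpa [hconst] using hd
  rw [key]
  simpa [toC, Matrix.map_apply] using this
end

section
/- The coefficients of the spectral curve are integrals of motion: if A : I → M_N(ℝ) is a differentiable solution of the Lax equation Ȧ = [A, B(A)] on an interval I, then for every z ∈ ℂ the characteristic polynomial λ ↦ det(A(t) − z M_y − λ·Id) is independent of t; equivalently, Tr((A(t) − z M_y)^k) is constant in t for every z ∈ ℂ and every positive integer k. -/
open Matrix BigOperators Finset

lemma const_of_hasDerivAt_zero {φ : ℝ → ℂ} {I : Set ℝ} (hI : I.OrdConnected)
    (h : ∀ t ∈ I, HasDerivAt φ 0 t) {t₁ t₂ : ℝ} (h1 : t₁ ∈ I) (h2 : t₂ ∈ I) : φ t₁ = φ t₂ := by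
  have hconv : Convex ℝ I := hI.convex
  have key := hconv.norm_image_sub_le_of_norm_hasFDerivWithin_le
      (f' := fun _ => (0 : ℝ →L[ℝ] ℂ)) (C := 0)
      (fun x hx => by
        have h2 := ((h x hx).hasDerivWithinAt (s := I)).hasFDerivWithinAt
        have : ContinuousLinearMap.toSpanSingleton ℝ (0 : ℂ) = 0 := by
          ext; simp
        rwa [this] at h2)
      (fun x hx => by simp) h2 h1
  simp only [zero_mul] at key
  exact sub_eq_zero.mp (norm_eq_zero.mp (le_antisymm key (norm_nonneg _)))

lemma hasDerivAt_det_comm {n : ℕ} (X : ℝ → Matrix (Fin n) (Fin n) ℂ)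
    (C : Matrix (Fin n) (Fin n) ℂ) (t : ℝ)
    (hX : ∀ i j, HasDerivAt (fun s => X s i j) (C i j) t) :
    HasDerivAt (fun s => (X s).det) ((Matrix.adjugate (X t) * C).trace) t := by
  have h1 : ∀ σ : Equiv.Perm (Fin n), HasDerivAt (fun s => ∏ i, X s (σ i) i)
      (∑ i, (∏ j ∈ Finset.univ.erase i, X t (σ j) j) • C (σ i) i) t :=
    fun σ => HasDerivAt.fun_finsetProd (fun i _ => hX (σ i) i)
  have h2 := HasDerivAt.fun_sum (fun σ (_ : σ ∈ (Finset.univ : Finset (Equiv.Perm (Fin n)))) =>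
      ((h1 σ).const_mul (((Equiv.Perm.sign σ : ℤ) : ℂ))))
  have hfun : (fun s => (X s).det)
      = fun s => ∑ σ : Equiv.Perm (Fin n), ((Equiv.Perm.sign σ : ℤ) : ℂ) * ∏ i, X s (σ i) i := by
    funext s; rw [Matrix.det_apply']
  have hval : (Matrix.adjugate (X t) * C).trace
      = ∑ σ : Equiv.Perm (Fin n), ((Equiv.Perm.sign σ : ℤ) : ℂ) *
          ∑ i, (∏ j ∈ Finset.univ.erase i, X t (σ j) j) • C (σ i) i := by
    have lhs : (Matrix.adjugate (X t) * C).trace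
        = ∑ i, ((X t).updateCol i (fun r => C r i)).det := by
      refine Finset.sum_congr rfl fun i _ => ?_
      rw [← Matrix.cramer_apply, Matrix.cramer_eq_adjugate_mulVec]
      simp [Matrix.mulVec, dotProduct, Matrix.mul_apply]
    rw [lhs]
    have upd : ∀ i, ((X t).updateCol i (fun r => C r i)).det
        = ∑ σ : Equiv.Perm (Fin n), ((Equiv.Perm.sign σ : ℤ) : ℂ) *
            (C (σ i) i * ∏ j ∈ Finset.univ.erase i, X t (σ j) j) := by
      intro i
      rw [Matrix.det_apply']
      refine Finset.sum_congr rfl fun σ _ => ?_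
      congr 1
      rw [← Finset.mul_prod_erase Finset.univ _ (Finset.mem_univ i)]
      congr 1
      · simp [Matrix.updateCol_apply]
      · refine Finset.prod_congr rfl fun j hj => ?_
        simp [Matrix.updateCol_apply, (Finset.mem_erase.mp hj).1]
    simp only [upd]
    conv_lhs => rw [Finset.sum_comm]
    refine Finset.sum_congr rfl fun σ _ => ?_
    rw [Finset.mul_sum]
    refine Finset.sum_congr rfl fun i _ => ?_
    simp only [smul_eq_mul]; ring
  rw [hfun, hval]
  exact h2

lemma hasDerivAt_pow_entry {n : ℕ} {L : ℝ → Matrix (Fin n) (Fin n) ℂ}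
    {Mt : Matrix (Fin n) (Fin n) ℂ} {t : ℝ}
    (hL : ∀ i j, HasDerivAt (fun s => L s i j) ((L t * Mt - Mt * L t) i j) t) :
    ∀ k i j, HasDerivAt (fun s => (L s ^ k) i j) ((L t ^ k * Mt - Mt * L t ^ k) i j) t := by
  intro k
  induction k with
  | zero =>
    intro i j
    simp only [pow_zero, one_mul, mul_one, sub_self, Matrix.zero_apply]
    exact hasDerivAt_const _ _
  | succ k ih =>
    intro i j
    have h1 : HasDerivAt (fun s => ∑ m, (L s ^ k) i m * L s m j)
        (∑ m, ((L t ^ k * Mt - Mt * L t ^ k) i m * L t m j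
          + (L t ^ k) i m * ((L t * Mt - Mt * L t) m j))) t :=
      HasDerivAt.fun_sum fun m _ => (ih i m).mul (hL m j)
    have hfun : (fun s => (L s ^ (k + 1)) i j) = fun s => ∑ m, (L s ^ k) i m * L s m j := by
      funext s; rw [pow_succ, Matrix.mul_apply]
    have key : L t ^ (k + 1) * Mt - Mt * L t ^ (k + 1)
        = (L t ^ k * Mt - Mt * L t ^ k) * L t + L t ^ k * (L t * Mt - Mt * L t) := by
      rw [pow_succ]; noncomm_ring
    rw [hfun, key, Matrix.add_apply, Matrix.mul_apply, Matrix.mul_apply,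
      ← Finset.sum_add_distrib]
    exact h1


/-- The coefficients of the spectral curve are integrals of motion: along any
solution of the Lax equation `Ȧ = [A, B(A)]` on an interval `I`, the characteristic
polynomial `λ ↦ det(A(t) - z M_y - λ·Id)` is independent of `t` for every `z ∈ ℂ`;
equivalently `Tr((A(t) - z M_y)^k)` is constant in `t` for every `z` and every
positive integer `k`. -/
theorem spectral_curve_invariant (N : ℕ) (u : Fin N → ℝ) (hu : StrictMono u)
    (f : ℝ → ℝ) (I : Set ℝ) (hI : I.OrdConnected)
    (A : ℝ → Matrix (Fin N) (Fin N) ℝ)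
    (hA : ∀ t ∈ I, ∀ i j, HasDerivAt (fun s => A s i j)
      (matComm (A t) (BofA u f (A t)) i j) t) :
    ∀ z : ℂ, ∀ t₁ ∈ I, ∀ t₂ ∈ I,
      (∀ lam : ℂ,
        (toC (A t₁) - z • Matrix.diagonal (fun k => (u k : ℂ)) - lam • 1).det =
        (toC (A t₂) - z • Matrix.diagonal (fun k => (u k : ℂ)) - lam • 1).det) ∧
      (∀ k : ℕ, 0 < k →
        ((toC (A t₁) - z • Matrix.diagonal (fun i => (u i : ℂ))) ^ k).trace =
        ((toC (A t₂) - z • Matrix.diagonal (fun i => (u i : ℂ))) ^ k).trace) := by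
  intro z t₁ ht₁ t₂ ht₂
  set D' : Matrix (Fin N) (Fin N) ℂ := Matrix.diagonal (fun k => z * (u k : ℂ)) with hD'
  set E' : Matrix (Fin N) (Fin N) ℂ := Matrix.diagonal (fun k => z * (f (u k) : ℂ)) with hE'
  have hD : z • Matrix.diagonal (fun k : Fin N => ((u k : ℝ) : ℂ)) = D' := by
    rw [hD']
    ext i j
    simp [Matrix.diagonal_apply, mul_ite]
  set P : ℝ → Matrix (Fin N) (Fin N) ℂ := fun s => toC (A s) with hP
  set Q : ℝ → Matrix (Fin N) (Fin N) ℂ := fun s => toC (BofA u f (A s)) with hQ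
  -- the compatibility identity [P, E'] = [D', Q]
  have hcomm : ∀ t : ℝ, P t * E' - E' * P t = D' * Q t - Q t * D' := by
    intro t
    rw [hD', hE']
    ext i j
    simp only [Matrix.sub_apply, Matrix.mul_diagonal, Matrix.diagonal_mul]
    by_cases hij : i = j
    · subst hij; ring
    · have hPij : P t i j = ((A t i j : ℝ) : ℂ) := by simp [hP, toC, Matrix.map_apply]
      have hQij : Q t i j
          = ((-((f (u i) - f (u j)) / (u i - u j)) * A t i j : ℝ) : ℂ) := by
        simp [hQ, toC, Matrix.map_apply, BofA, Fmat, Matrix.of_apply, hij]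
      rw [hPij, hQij]
      have hne : ((u i : ℂ)) - (u j : ℂ) ≠ 0 := by
        rw [sub_ne_zero]
        exact_mod_cast (hu.injective.ne hij)
      push_cast
      field_simp
      ring
  have hDE : D' * E' - E' * D' = 0 := by
    rw [hD', hE', Matrix.diagonal_mul_diagonal, Matrix.diagonal_mul_diagonal, sub_eq_zero]
    have : (fun k => z * (u k : ℂ) * (z * (f (u k) : ℂ)))
        = (fun k => z * (f (u k) : ℂ) * (z * (u k : ℂ))) := by funext k; ring
    rw [this]
  have hkey : ∀ t : ℝ, (P t - D') * (Q t + E') - (Q t + E') * (P t - D')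
      = P t * Q t - Q t * P t := by
    intro t
    have expand : (P t - D') * (Q t + E') - (Q t + E') * (P t - D')
        = (P t * Q t - Q t * P t) + ((P t * E' - E' * P t) - (D' * Q t - Q t * D'))
          - (D' * E' - E' * D') := by noncomm_ring
    rw [expand, hcomm t, hDE]
    simp
  have hPQ : ∀ t : ℝ, P t * Q t - Q t * P t = toC (matComm (A t) (BofA u f (A t))) := by
    intro t
    ext i j
    simp only [hP, hQ, toC, matComm, Matrix.map_apply, Matrix.sub_apply, Matrix.mul_apply]
    push_cast
    ring
  -- entrywise Lax equation for L s = P s - D'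
  have hL : ∀ t ∈ I, ∀ i j, HasDerivAt (fun s => (P s - D') i j)
      (((P t - D') * (Q t + E') - (Q t + E') * (P t - D')) i j) t := by
    intro t ht i j
    have h0 := (hA t ht i j).ofReal_comp
    have hfe : (fun s => (P s - D') i j) = fun s => ((A s i j : ℝ) : ℂ) - D' i j := by
      funext s; simp [hP, toC, Matrix.sub_apply, Matrix.map_apply]
    have h2 : ((P t - D') * (Q t + E') - (Q t + E') * (P t - D')) i j
        = ((matComm (A t) (BofA u f (A t)) i j : ℝ) : ℂ) := by
      rw [hkey t, hPQ t]
      simp [toC, Matrix.map_apply]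
    rw [h2, hfe]
    exact h0.sub_const _
  rw [hD]
  constructor
  · -- determinant part
    intro lam
    refine const_of_hasDerivAt_zero
      (φ := fun s => (toC (A s) - D' - lam • 1).det) hI ?_ ht₁ ht₂
    intro t ht
    have hXd : ∀ i j, HasDerivAt (fun s => (P s - D' - lam • 1) i j)
        (((P t - D') * (Q t + E') - (Q t + E') * (P t - D')) i j) t := by
      intro i j
      have hfe : (fun s => (P s - D' - lam • 1) i j)
          = fun s => (P s - D') i j - (lam • (1 : Matrix (Fin N) (Fin N) ℂ)) i j := by
        funext s; simp [Matrix.sub_apply]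
      rw [hfe]
      exact (hL t ht i j).sub_const _
    have hC : (P t - D') * (Q t + E') - (Q t + E') * (P t - D')
        = (P t - D' - lam • 1) * (Q t + E') - (Q t + E') * (P t - D' - lam • 1) := by
      have hone : (lam • (1 : Matrix (Fin N) (Fin N) ℂ)) * (Q t + E')
          = (Q t + E') * (lam • 1) := by
        rw [smul_mul_assoc, mul_smul_comm, one_mul, mul_one]
      conv_rhs => rw [sub_mul, mul_sub]
      rw [hone]
      abel
    rw [hC] at hXd
    have hder := hasDerivAt_det_comm (fun s => P s - D' - lam • 1) _ t hXd
    have hz : ((P t - D' - lam • 1).adjugate *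
        ((P t - D' - lam • 1) * (Q t + E') - (Q t + E') * (P t - D' - lam • 1))).trace = 0 := by
      set X := P t - D' - lam • (1 : Matrix (Fin N) (Fin N) ℂ)
      set Mf := Q t + E'
      rw [mul_sub, trace_sub, ← mul_assoc, Matrix.adjugate_mul]
      rw [trace_mul_comm X.adjugate (Mf * X), mul_assoc, Matrix.mul_adjugate]
      simp [smul_mul_assoc, mul_smul_comm, Matrix.trace_smul, Matrix.trace_mul_comm]
    rw [hz] at hder
    exact hder
  · -- trace part
    intro k hk
    refine const_of_hasDerivAt_zero
      (φ := fun s => ((toC (A s) - D') ^ k).trace) hI ?_ ht₁ ht₂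
    intro t ht
    have hp := hasDerivAt_pow_entry (L := fun s => P s - D') (Mt := Q t + E') (t := t)
      (fun i j => hL t ht i j) k
    have hsum : HasDerivAt (fun s => ∑ i, ((P s - D') ^ k) i i)
        (∑ i, ((P t - D') ^ k * (Q t + E') - (Q t + E') * (P t - D') ^ k) i i) t :=
      HasDerivAt.fun_sum fun i _ => hp i i
    have hfe : (fun s => ((P s - D') ^ k).trace) = fun s => ∑ i, ((P s - D') ^ k) i i := by
      funext s; rfl
    have hval : (∑ i, ((P t - D') ^ k * (Q t + E') - (Q t + E') * (P t - D') ^ k) i i) = 0 := by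
      have : (∑ i, ((P t - D') ^ k * (Q t + E') - (Q t + E') * (P t - D') ^ k) i i)
          = ((P t - D') ^ k * (Q t + E') - (Q t + E') * (P t - D') ^ k).trace := rfl
      rw [this, trace_sub, Matrix.trace_mul_comm, sub_self]
    rw [hfe]
    rw [← hval]
    exact hsum
end

section
/- Convexity implies positivity of the clustering terms: let f : ℝ → ℝ be convex and u_1 < … < u_N. If A ∈ M_N(ℝ) is lower triangular with nonnegative off-diagonal entries and A_ij = 0 for a fixed pair i > j, then the (i,j) entry of the commutator satisfies [A, B(A)]_ij = Σ_{j < k < i} (F_kj − F_ik) A_ik A_kj ≥ 0, where each factor F_kj − F_ik = (f(u_i)−f(u_k))/(u_i−u_k) − (f(u_k)−f(u_j))/(u_k−u_j) is nonnegative by convexity of f. -/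
open Matrix BigOperators Finset

/-- `L` is lower triangular: `L_{ij} = 0` whenever `i < j`. -/
def lowerTri {N : ℕ} (L : Matrix (Fin N) (Fin N) ℝ) : Prop :=
  ∀ i j : Fin N, i < j → L i j = 0

/-- Convexity implies positivity of the clustering terms: for lower-triangular `A`
with nonnegative off-diagonal entries and `A_{ij} = 0` for a fixed `i > j`, the
`(i,j)` entry of the commutator equals
`∑_{j < k < i} (F_{kj} - F_{ik}) A_{ik} A_{kj} ≥ 0`, with each factor
`F_{kj} - F_{ik} = (f(u_i)-f(u_k))/(u_i-u_k) - (f(u_k)-f(u_j))/(u_k-u_j)`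
nonnegative by convexity of `f`. -/
theorem convexity_clustering_positive (N : ℕ) (u : Fin N → ℝ)
    (hu : StrictMono u) (f : ℝ → ℝ) (hconvex : ConvexOn ℝ Set.univ f)
    (A : Matrix (Fin N) (Fin N) ℝ)
    (hlow : lowerTri A) (hpos : ∀ i j : Fin N, i ≠ j → 0 ≤ A i j)
    (i j : Fin N) (hij : j < i) (hzero : A i j = 0) :
    matComm A (BofA u f A) i j =
      ∑ k ∈ Finset.univ.filter (fun k => j < k ∧ k < i),
        (Fmat u f k j - Fmat u f i k) * (A i k * A k j) ∧
    0 ≤ matComm A (BofA u f A) i j ∧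
    (∀ k : Fin N, j < k → k < i →
      Fmat u f k j - Fmat u f i k =
        (f (u i) - f (u k)) / (u i - u k) - (f (u k) - f (u j)) / (u k - u j) ∧
      0 ≤ Fmat u f k j - Fmat u f i k) := by

  classical
  have hFact : ∀ k : Fin N, j < k → k < i →
      Fmat u f k j - Fmat u f i k =
        (f (u i) - f (u k)) / (u i - u k) - (f (u k) - f (u j)) / (u k - u j) ∧
      0 ≤ Fmat u f k j - Fmat u f i k := by
    intro k hjk hki
    have hkj : k ≠ j := ne_of_gt hjk
    have hik : i ≠ k := ne_of_gt hki
    have heq : Fmat u f k j - Fmat u f i k =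
        (f (u i) - f (u k)) / (u i - u k) - (f (u k) - f (u j)) / (u k - u j) := by
      simp only [Fmat, Matrix.of_apply, if_neg hkj, if_neg hik]
      ring
    refine ⟨heq, ?_⟩
    rw [heq]
    have hslope := hconvex.slope_mono_adjacent (Set.mem_univ (u j)) (Set.mem_univ (u i))
      (hu hjk) (hu hki)
    linarith [hslope]
  set s := Finset.univ.filter (fun k : Fin N => j < k ∧ k < i) with hs
  have h1 : (∑ k, A i k * BofA u f A k j)
      = ∑ k ∈ s, Fmat u f k j * (A i k * A k j) := by
    rw [hs, ← Finset.sum_filter_of_ne (p := fun k : Fin N => j < k ∧ k < i)]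
    · refine Finset.sum_congr rfl ?_
      intro k hk
      simp only [Finset.mem_filter] at hk
      obtain ⟨-, hjk, hki⟩ := hk
      have hkj : k ≠ j := ne_of_gt hjk
      simp only [BofA, Matrix.of_apply, if_neg hkj]
      ring
    · intro k _ hne
      by_contra hcon
      apply hne
      rcases lt_trichotomy k j with h1 | h1 | h1
      · have hkj : k ≠ j := ne_of_lt h1
        simp [BofA, if_neg hkj, hlow k j h1]
      · subst h1
        simp [hzero]
      · rcases lt_trichotomy k i with h2 | h2 | h2
        · exact absurd ⟨h1, h2⟩ hcon
        · subst h2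
          have hkj : k ≠ j := ne_of_gt h1
          simp [BofA, if_neg hkj, hzero]
        · simp [hlow i k h2]
  have h2 : (∑ k, BofA u f A i k * A k j)
      = ∑ k ∈ s, Fmat u f i k * (A i k * A k j) := by
    rw [hs, ← Finset.sum_filter_of_ne (p := fun k : Fin N => j < k ∧ k < i)]
    · refine Finset.sum_congr rfl ?_
      intro k hk
      simp only [Finset.mem_filter] at hk
      obtain ⟨-, hjk, hki⟩ := hk
      have hik : i ≠ k := ne_of_gt hki
      simp only [BofA, Matrix.of_apply, if_neg hik]
      ring
    · intro k _ hne
      by_contra hcon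
      apply hne
      rcases lt_trichotomy k j with h1 | h1 | h1
      · simp [hlow k j h1]
      · subst h1
        have hik : i ≠ k := ne_of_gt hij
        simp [BofA, if_neg hik, hzero]
      · rcases lt_trichotomy k i with h2 | h2 | h2
        · exact absurd ⟨h1, h2⟩ hcon
        · subst h2
          simp [hzero]
        · have hik : i ≠ k := ne_of_lt h2
          simp [BofA, if_neg hik, hlow i k h2]
  have hmain : matComm A (BofA u f A) i j
      = ∑ k ∈ s, (Fmat u f k j - Fmat u f i k) * (A i k * A k j) := by
    simp only [matComm, Matrix.sub_apply, Matrix.mul_apply]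
    rw [h1, h2, ← Finset.sum_sub_distrib]
    refine Finset.sum_congr rfl fun k _ => by ring
  refine ⟨hmain, ?_, hFact⟩
  rw [hmain]
  refine Finset.sum_nonneg fun k hk => ?_
  simp only [hs, Finset.mem_filter] at hk
  obtain ⟨-, hjk, hki⟩ := hk
  have h0 := (hFact k hjk hki).2
  have hA1 : 0 ≤ A i k := hpos i k (ne_of_gt hki)
  have hA2 : 0 ≤ A k j := hpos k j (ne_of_gt hjk)
  positivity
end
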